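/- Let P be a polygon with n vertices whose boundary maps under σ_d as a covering map onto an n-gon σ_d(P). Then P can be extended to a sibling portrait in the disk (equivalently, P partitions the preimage vertices into groups of equal label-counts in each complementary region) if and only if σ_d restricted to the boundary of P is positively oriented. -/
import Mathlib

/-- Cyclic displacement (number of steps counterclockwise) from `a` to `x` among
`m` marked points on the circle. -/
def arcPos {m : ℕ} (a x : Fin m) : ℕ := (x.val + m - a.val) % m

/-- `t` lies strictly between `p` and `q` in counterclockwise cyclic order. -/
def CycBtw {m : ℕ} (p t q : Fin m) : Prop := 0 < arcPos p t ∧ arcPos p t < arcPos p q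

/-- `q` is the next vertex of `S` counterclockwise after `p`. -/
def IsNext {m : ℕ} (S : Finset (Fin m)) (p q : Fin m) : Prop :=
  p ∈ S ∧ q ∈ S ∧ p ≠ q ∧ ∀ r ∈ S, ¬ CycBtw p r q

/-- The label of a marked point: the points are cyclically labeled by repetitions
of the word `x_0 x_1 … x_{n-1}`. -/
def label (n : ℕ) {m : ℕ} (p : Fin m) : ZMod n := (p.val : ZMod n)

/-- `S` is a polygon visiting the labels in positive (counterclockwise) cyclic
order, i.e. its boundary maps forward as a positively oriented covering of the
boundary of the `n`-gon. -/
def IsPosPolygon (n : ℕ) {m : ℕ} (S : Finset (Fin m)) : Prop :=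
  2 ≤ S.card ∧ n ∣ S.card ∧ ∀ p q, IsNext S p q → label n q = label n p + 1

/-- Two vertex sets cross (link) on the circle. -/
def Crosses {m : ℕ} (S T : Finset (Fin m)) : Prop :=
  ∃ p ∈ S, ∃ q ∈ S, ∃ r ∈ T, ∃ s ∈ T, CycBtw p r q ∧ CycBtw q s p

/-- A sibling portrait of the `n`-gon in a round gap of degree `D`: a collection of
pairwise disjoint, non-crossing, positively oriented polygons using all `D*n`
preimage points (so that together `D` sides map to each side of the `n`-gon). -/
def IsPortrait (D n : ℕ) (PP : Finset (Finset (Fin (D * n)))) : Prop :=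
  (∀ S ∈ PP, IsPosPolygon n S) ∧
  (∀ S ∈ PP, ∀ T ∈ PP, S ≠ T → Disjoint S T ∧ ¬ Crosses S T) ∧
  (∀ p : Fin (D * n), ∃ S ∈ PP, p ∈ S)

/-- `S` is a polygon whose boundary maps as a (possibly orientation-reversing)
covering of the boundary of the `n`-gon: every label is visited and consecutive
vertices of `S` carry consecutive labels, always advancing in the same direction. -/
def IsCoveringPolygon (n : ℕ) {m : ℕ} (S : Finset (Fin m)) : Prop :=
  2 ≤ S.card ∧ n ∣ S.card ∧ (∀ l : ZMod n, ∃ p ∈ S, label n p = l) ∧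
    ((∀ p q, IsNext S p q → label n q = label n p + 1) ∨
     (∀ p q, IsNext S p q → label n q = label n p - 1))

namespace SiblingAux

variable {m : ℕ}

/-- The point `j` steps counterclockwise from `a`. -/
def pt (a : Fin m) (j : ℕ) : Fin m := ⟨(a.val + j) % m, Nat.mod_lt _ a.pos⟩

lemma pt_val (a : Fin m) (j : ℕ) : (pt a j).val = (a.val + j) % m := rfl

lemma mod_cases {a j : ℕ} (ha : a < m) (hj : j < m) :
    ((a + j) % m = a + j ∧ a + j < m) ∨ ((a + j) % m = a + j - m ∧ m ≤ a + j) := by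
  rcases Nat.lt_or_ge (a + j) m with h | h
  · exact Or.inl ⟨Nat.mod_eq_of_lt h, h⟩
  · refine Or.inr ⟨?_, h⟩
    rw [Nat.mod_eq_sub_mod h, Nat.mod_eq_of_lt (by omega)]

lemma arcPos_eq (a x : Fin m) :
    arcPos a x = if a.val ≤ x.val then x.val - a.val else x.val + m - a.val := by
  unfold arcPos
  have hx := x.isLt; have ha := a.isLt
  split_ifs with h
  · rw [show x.val + m - a.val = (x.val - a.val) + m by omega, Nat.add_mod_right,
      Nat.mod_eq_of_lt (by omega)]
  · exact Nat.mod_eq_of_lt (by omega)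

lemma arcPos_lt (a x : Fin m) : arcPos a x < m := by
  rw [arcPos_eq]; have := x.isLt; have := a.isLt; split_ifs <;> omega

lemma arcPos_self (a : Fin m) : arcPos a a = 0 := by
  rw [arcPos_eq]; simp

lemma arcPos_zero_iff {a x : Fin m} : arcPos a x = 0 ↔ x = a := by
  rw [arcPos_eq, Fin.ext_iff]; have := x.isLt; have := a.isLt; split_ifs <;> omega

lemma arcPos_pt (a : Fin m) {j : ℕ} (hj : j < m) : arcPos a (pt a j) = j := by
  rw [arcPos_eq, pt_val]
  have ha := a.isLt
  rcases mod_cases ha hj with ⟨h1, h2⟩ | ⟨h1, h2⟩ <;> split_ifs <;> omega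

lemma pt_arc (p x : Fin m) : pt p (arcPos p x) = x := by
  apply Fin.ext
  rw [pt_val, arcPos_eq]
  have hx := x.isLt; have hp := p.isLt
  split_ifs with h
  · rw [show p.val + (x.val - p.val) = x.val by omega, Nat.mod_eq_of_lt hx]
  · rw [show p.val + (x.val + m - p.val) = x.val + m by omega, Nat.add_mod_right,
      Nat.mod_eq_of_lt hx]

lemma pt_pt (a : Fin m) (i j : ℕ) : pt (pt a i) j = pt a (i + j) := by
  apply Fin.ext
  rw [pt_val, pt_val, pt_val, Nat.mod_add_mod, Nat.add_assoc]

lemma pt_inj {a : Fin m} {i j : ℕ} (hi : i < m) (hj : j < m) (h : pt a i = pt a j) : i = j := by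
  have h1 := arcPos_pt a hi
  have h2 := arcPos_pt a hj
  rw [← h1, ← h2, h]

lemma pt_base_inj {j : ℕ} (hj : j < m) {x y : Fin m} (h : pt x j = pt y j) : x = y := by
  apply Fin.ext
  have hv := congrArg Fin.val h
  rw [pt_val, pt_val] at hv
  have hx := x.isLt; have hy := y.isLt
  rcases mod_cases hx hj with ⟨h1, h2⟩ | ⟨h1, h2⟩ <;>
    rcases mod_cases hy hj with ⟨h3, h4⟩ | ⟨h3, h4⟩ <;> omega

lemma arcPos_pt_pt (a : Fin m) {i j : ℕ} (hi : i < m) (hj : j < m) :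
    arcPos (pt a i) (pt a j) = if i ≤ j then j - i else j + m - i := by
  rw [arcPos_eq, pt_val, pt_val]
  have ha := a.isLt
  rcases mod_cases ha hi with ⟨h1, h2⟩ | ⟨h1, h2⟩ <;>
    rcases mod_cases ha hj with ⟨h3, h4⟩ | ⟨h3, h4⟩ <;>
      rw [h1, h3] <;> split_ifs <;> omega

lemma label_arc {n : ℕ} (hdvd : n ∣ m) (x y : Fin m) :
    label n y = label n x + ((arcPos x y : ℕ) : ZMod n) := by
  have hm0 : ((m : ℕ) : ZMod n) = 0 := (ZMod.natCast_eq_zero_iff m n).mpr hdvd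
  unfold label
  rw [arcPos_eq]
  have hx := x.isLt; have hy := y.isLt
  split_ifs with h
  · rw [Nat.cast_sub h]; ring
  · rw [Nat.cast_sub (by omega : x.val ≤ y.val + m)]
    push_cast
    rw [hm0]; ring

lemma cast_one_iff {n : ℕ} (hn : 2 ≤ n) (j : ℕ) : ((j : ℕ) : ZMod n) = 1 ↔ j % n = 1 := by
  haveI : NeZero n := ⟨by omega⟩
  haveI : Fact (1 < n) := ⟨by omega⟩
  constructor
  · intro h
    have := congrArg ZMod.val h
    rwa [ZMod.val_natCast, ZMod.val_one] at this
  · intro h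
    rw [← ZMod.natCast_mod j n, h, Nat.cast_one]

lemma isNext_min {S : Finset (Fin m)} {p q : Fin m} (h : IsNext S p q) :
    ∀ r ∈ S, r ≠ p → arcPos p q ≤ arcPos p r := by
  intro r hr hrp
  by_contra hlt
  exact h.2.2.2 r hr ⟨Nat.pos_of_ne_zero (fun h0 => hrp (arcPos_zero_iff.1 h0)), by omega⟩

lemma next_unique {S : Finset (Fin m)} {p q q' : Fin m}
    (h1 : IsNext S p q) (h2 : IsNext S p q') : q = q' := by
  have ha := isNext_min h1 q' h2.2.1 (Ne.symm h2.2.2.1)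
  have hb := isNext_min h2 q h1.2.1 (Ne.symm h1.2.2.1)
  have : arcPos p q = arcPos p q' := le_antisymm ha hb
  rw [← pt_arc p q, ← pt_arc p q', this]

lemma next_exists {S : Finset (Fin m)} (h2 : 2 ≤ S.card) {p : Fin m} (hp : p ∈ S) :
    ∃ q, IsNext S p q := by
  have hne : (S.erase p).Nonempty := by
    rw [← Finset.card_pos, Finset.card_erase_of_mem hp]; omega
  obtain ⟨q, hq, hmin⟩ := Finset.exists_min_image (S.erase p) (fun r => arcPos p r) hne
  refine ⟨q, hp, Finset.mem_of_mem_erase hq, (Finset.ne_of_mem_erase hq).symm, ?_⟩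
  rintro r hr ⟨h0, hlt⟩
  have hrp : r ≠ p := fun e => by rw [e, arcPos_self] at h0; omega
  exact absurd hlt (not_lt.2 (hmin r (Finset.mem_erase.2 ⟨hrp, hr⟩)))

/-- A block of `n` consecutive marked points starting at `a`. -/
def blk (n : ℕ) (a : Fin m) : Finset (Fin m) := (Finset.range n).image (fun i => pt a i)

lemma mem_blk {n : ℕ} (hnm : n ≤ m) {a x : Fin m} : x ∈ blk n a ↔ arcPos a x < n := by
  constructor
  · rintro hx
    obtain ⟨i, hi, rfl⟩ := Finset.mem_image.1 hx
    rw [Finset.mem_range] at hi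
    rw [arcPos_pt a (by omega)]; exact hi
  · intro h
    exact Finset.mem_image.2 ⟨arcPos a x, Finset.mem_range.2 h, pt_arc a x⟩

lemma blk_card {n : ℕ} (hnm : n ≤ m) (a : Fin m) : (blk n a).card = n := by
  rw [blk, Finset.card_image_of_injOn, Finset.card_range]
  intro i hi j hj hij
  rw [Finset.mem_coe, Finset.mem_range] at hi hj
  exact pt_inj (by omega) (by omega) hij

lemma crosses_symm {S T : Finset (Fin m)} (h : Crosses S T) : Crosses T S := by
  obtain ⟨p, hp, q, hq, r, hr, s, hs, h1, h2⟩ := h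
  refine ⟨r, hr, s, hs, q, hq, p, hp, ?_, ?_⟩ <;>
  · simp only [CycBtw, arcPos_eq] at h1 h2 ⊢
    have := p.isLt; have := q.isLt; have := r.isLt; have := s.isLt
    split_ifs at h1 h2 ⊢ <;> omega

lemma noncross_blk {n : ℕ} (hnm : n ≤ m) {S : Finset (Fin m)} {a : Fin m}
    (h : Disjoint S (blk n a)) : ¬ Crosses S (blk n a) := by
  rintro ⟨p, hp, q, hq, r, hr, s, hs, h1, h2⟩
  have hpn : ¬ arcPos a p < n := fun hh => (Finset.disjoint_left.1 h hp) ((mem_blk hnm).2 hh)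
  have hqn : ¬ arcPos a q < n := fun hh => (Finset.disjoint_left.1 h hq) ((mem_blk hnm).2 hh)
  have hrn : arcPos a r < n := (mem_blk hnm).1 hr
  have hsn : arcPos a s < n := (mem_blk hnm).1 hs
  simp only [CycBtw, arcPos_eq] at h1 h2 hpn hqn hrn hsn
  have := p.isLt; have := q.isLt; have := r.isLt; have := s.isLt; have := a.isLt
  split_ifs at h1 h2 hpn hqn hrn hsn <;> omega

lemma blk_pos {n : ℕ} (hn : 2 ≤ n) (hdvd : n ∣ m) (a : Fin m) : IsPosPolygon n (blk n a) := by
  have hm0 : 0 < m := a.pos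
  have hnm : n ≤ m := Nat.le_of_dvd hm0 hdvd
  refine ⟨by rw [blk_card hnm]; exact hn, by rw [blk_card hnm], ?_⟩
  intro p q hnext
  obtain ⟨i, hi, rfl⟩ := Finset.mem_image.1 hnext.1
  rw [Finset.mem_range] at hi
  by_cases hi1 : i + 1 < n
  · have hq' : IsNext (blk n a) (pt a i) (pt a (i + 1)) := by
      refine ⟨hnext.1, Finset.mem_image.2 ⟨i + 1, Finset.mem_range.2 hi1, rfl⟩, ?_, ?_⟩
      · intro he; have := pt_inj (a := a) (by omega) (by omega) he; omega
      · rintro r hr ⟨h0, hlt⟩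
        rw [arcPos_pt_pt a (by omega) (by omega)] at hlt
        simp only [show i ≤ i + 1 by omega, if_true] at hlt
        omega
    have hq := next_unique hnext hq'
    subst hq
    rw [label_arc hdvd (pt a i) (pt a (i + 1)), arcPos_pt_pt a (show i < m by omega) (show i + 1 < m by omega)]
    simp [show i ≤ i + 1 by omega]
  · have hin : i + 1 = n := by omega
    have hq' : IsNext (blk n a) (pt a i) (pt a 0) := by
      refine ⟨hnext.1, Finset.mem_image.2 ⟨0, Finset.mem_range.2 (by omega), rfl⟩, ?_, ?_⟩
      · intro he; have := pt_inj (a := a) (by omega) (by omega) he; omega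
      · rintro r hr ⟨h0, hlt⟩
        obtain ⟨j, hj, rfl⟩ := Finset.mem_image.1 hr
        rw [Finset.mem_range] at hj
        rw [arcPos_pt_pt a (by omega) (by omega)] at h0 hlt
        rw [arcPos_pt_pt a (by omega) (by omega)] at hlt
        split_ifs at h0 hlt <;> omega
    have hq := next_unique hnext hq'
    subst hq
    rw [label_arc hdvd (pt a i) (pt a 0), arcPos_pt_pt a (show i < m by omega) (show 0 < m by omega)]
    have hiff : ¬ i ≤ 0 := by omega
    simp only [hiff, if_false]
    obtain ⟨k, hk⟩ := hdvd
    have hk1 : 1 ≤ k := by nlinarith [hm0]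
    have : (0 + m - i : ℕ) = n * (k - 1) + 1 := by
      have hnk : n * (k - 1) + n = n * k := by
        rcases k with _ | k'
        · omega
        · simp only [Nat.succ_sub_one]; ring
      omega
    rw [this]
    push_cast
    simp [ZMod.natCast_self]

lemma helper2 {n ax ay i j : ℕ} (hi : i < n) (hj : j < n) (h : n * ax + i = n * ay + j) :
    ax = ay ∧ i = j := by
  rcases Nat.lt_trichotomy ax ay with hh | hh | hh
  · have h1 : n * (ax + 1) ≤ n * ay := Nat.mul_le_mul_left n (by omega)
    have h2 : n * (ax + 1) = n * ax + n := by ring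
    omega
  · subst hh; omega
  · have h1 : n * (ay + 1) ≤ n * ax := Nat.mul_le_mul_left n (by omega)
    have h2 : n * (ay + 1) = n * ay + n := by ring
    omega

lemma natHelper {n e gp : ℕ} (hn : 2 ≤ n) (he : 1 ≤ e) (hlt : e < gp) (hg : gp % n = 1) :
    (e - (e - 1) % n) + (n - 1) ≤ gp - 1 := by
  have h1 := Nat.div_add_mod (e - 1) n
  have h2 := Nat.div_add_mod gp n
  set a := (e - 1) / n with ha
  set c := gp / n with hc
  have hr : (e - 1) % n < n := Nat.mod_lt _ (by omega)
  have hac : a < c := by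
    by_contra hcc
    push_neg at hcc
    have := Nat.mul_le_mul_left n hcc
    omega
  have h3 : n * (a + 1) ≤ n * c := Nat.mul_le_mul_left n (by omega)
  have h4 : n * (a + 1) = n * a + n := by ring
  omega

end SiblingAux

open SiblingAux in
/-- A polygon `P` whose boundary maps under `σ_d` as a covering map
onto an `n`-gon can be extended to a sibling portrait in the disk if and only if
the covering is positively oriented. -/
theorem extendable_iff_positively_oriented (d n : ℕ) (hd : 1 ≤ d) (hn : 2 ≤ n)
    (P : Finset (Fin (d * n))) (hP : IsCoveringPolygon n P) :
    (∃ PP : Finset (Finset (Fin (d * n))), IsPortrait d n PP ∧ P ∈ PP) ↔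
      ∀ p q, IsNext P p q → label n q = label n p + 1 := by
  constructor
  · rintro ⟨PP, hPort, hmem⟩
    exact (hPort.1 P hmem).2.2
  · intro hpos
    classical
    obtain ⟨hc2, hdvd, -, -⟩ := hP
    have hm0 : 0 < d * n := by positivity
    have hnm : n ∣ d * n := Dvd.intro_left d rfl
    have hnle : n ≤ d * n := Nat.le_of_dvd hm0 hnm
    have hPne : P.Nonempty := Finset.card_pos.1 (by omega)
    -- next-vertex function on P
    have hnexta : ∀ p : Fin (d * n), ∃ q, p ∈ P → IsNext P p q := by
      intro p
      by_cases hp : p ∈ P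
      · obtain ⟨q, hq⟩ := next_exists hc2 hp; exact ⟨q, fun _ => hq⟩
      · exact ⟨p, fun h => absurd h hp⟩
    choose nxt hnxt using hnexta
    set g : Fin (d * n) → ℕ := fun p => arcPos p (nxt p) with hgdef
    have hglt : ∀ p, g p < d * n := fun p => arcPos_lt _ _
    have hgpos : ∀ p ∈ P, 0 < g p := by
      intro p hp
      refine Nat.pos_of_ne_zero (fun h0 => ?_)
      exact (hnxt p hp).2.2.1 (arcPos_zero_iff.1 h0).symm
    have hgmod : ∀ p ∈ P, g p % n = 1 := by
      intro p hp
      have h1 := hpos p (nxt p) (hnxt p hp)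
      have h2 := label_arc hnm p (nxt p)
      have h3 : ((g p : ℕ) : ZMod n) = 1 := by
        rw [h1] at h2
        exact (add_left_cancel h2).symm
      exact (cast_one_iff hn _).1 h3
    have hgapP : ∀ p ∈ P, ∀ t, 0 < t → t < g p → pt p t ∉ P := by
      intro p hp t h0 hlt hmem
      refine (hnxt p hp).2.2.2 _ hmem ⟨?_, ?_⟩ <;>
        rw [arcPos_pt p (by have := hglt p; omega)]
      · exact h0
      · exact hlt
    -- uniqueness of the gap a point belongs to
    have hkey : ∀ p ∈ P, ∀ p' ∈ P, ∀ t t' : ℕ, 0 < t' → t' < t → t < g p → t' < g p' →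
        pt p t = pt p' t' → False := by
      intro p hp p' hp' t t' h0' hlt hg1 hg2 heq
      have hstep : pt (pt p (t - t')) t' = pt p' t' := by
        rw [pt_pt, show (t - t') + t' = t by omega]; exact heq
      have hb := pt_base_inj (by have := hglt p'; omega) hstep
      have hnot : pt p (t - t') ∉ P := hgapP p hp (t - t') (by omega) (by omega)
      rw [hb] at hnot
      exact hnot hp'
    have huniq : ∀ p ∈ P, ∀ p' ∈ P, ∀ t t' : ℕ, 0 < t → t < g p → 0 < t' → t' < g p' →
        pt p t = pt p' t' → p = p' ∧ t = t' := by
      intro p hp p' hp' t t' h0 hg1 h0' hg2 heq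
      rcases Nat.lt_trichotomy t t' with h | h | h
      · exact (hkey p' hp' p hp t' t h0 h hg2 hg1 heq.symm).elim
      · subst h
        exact ⟨pt_base_inj (by have := hglt p; omega) heq, rfl⟩
      · exact (hkey p hp p' hp' t t' h0' h hg1 hg2 heq).elim
    -- distance back to the previous vertex of P
    set dp : Fin (d * n) → ℕ := fun x => sInf {j | ∃ p ∈ P, arcPos p x = j} with hdpdef
    obtain ⟨p₀, hp₀⟩ := hPne
    have hdpSet : ∀ x, {j | ∃ p ∈ P, arcPos p x = j}.Nonempty :=
      fun x => ⟨arcPos p₀ x, p₀, hp₀, rfl⟩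
    have hpreva : ∀ x, ∃ p, p ∈ P ∧ arcPos p x = dp x := by
      intro x
      obtain ⟨p, hp, he⟩ := Nat.sInf_mem (hdpSet x)
      exact ⟨p, hp, he⟩
    choose prv hprvP hprvArc using hpreva
    have hdple : ∀ x, ∀ p ∈ P, dp x ≤ arcPos p x := fun x p hp => Nat.sInf_le ⟨p, hp, rfl⟩
    have hdplt : ∀ x, dp x < d * n := by
      intro x; rw [← hprvArc x]; exact arcPos_lt _ _
    have hptdp : ∀ x, pt (prv x) (dp x) = x := by
      intro x; rw [← hprvArc x]; exact pt_arc _ _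
    have hdp0 : ∀ x, x ∉ P → 0 < dp x := by
      intro x hx
      refine Nat.pos_of_ne_zero (fun h0 => ?_)
      have := hprvArc x
      rw [h0] at this
      rw [arcPos_zero_iff.1 this] at hx
      exact hx (hprvP x)
    have hdpgap : ∀ x, x ∉ P → dp x < g (prv x) := by
      intro x hx
      by_contra h
      push_neg at h
      set p := prv x with hpdef
      have hqP : nxt p ∈ P := (hnxt p (hprvP x)).2.1
      have hgp := hgpos p (hprvP x)
      have hx2 : x = pt (nxt p) (dp x - g p) := by
        rw [show nxt p = pt p (g p) from (pt_arc p (nxt p)).symm, pt_pt,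
          show g p + (dp x - g p) = dp x by omega, hptdp x]
      have h4 : arcPos (nxt p) x = dp x - g p := by
        conv_lhs => rw [hx2]
        exact arcPos_pt _ (by have := hdplt x; omega)
      have h5 := hdple x (nxt p) hqP
      omega
    -- start of the block containing x
    set st : Fin (d * n) → Fin (d * n) := fun x => pt (prv x) (dp x - (dp x - 1) % n)
      with hstdef
    set sv : Fin (d * n) → ℕ := fun x => dp x - (dp x - 1) % n with hsvdef
    have hsv1 : ∀ x, x ∉ P → 1 ≤ sv x := by
      intro x hx
      have h1 := hdp0 x hx
      have h2 : (dp x - 1) % n ≤ dp x - 1 := Nat.mod_le _ _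
      simp only [hsvdef]; omega
    have hsvle : ∀ x, x ∉ P → sv x ≤ dp x := by
      intro x hx; simp only [hsvdef]; omega
    have hfit : ∀ x, x ∉ P → sv x + (n - 1) ≤ g (prv x) - 1 :=
      fun x hx => natHelper hn (hdp0 x hx) (hdpgap x hx) (hgmod (prv x) (hprvP x))
    have hsvmod : ∀ x, x ∉ P → sv x % n = 1 := by
      intro x hx
      have h1 := Nat.div_add_mod (dp x - 1) n
      have h2 := hdp0 x hx
      have h3 : sv x = n * ((dp x - 1) / n) + 1 := by simp only [hsvdef]; omega
      rw [h3, Nat.mul_add_mod]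
      exact Nat.mod_eq_of_lt (by omega)
    have hstv : ∀ x, st x = pt (prv x) (sv x) := fun x => rfl
    have hblkmem : ∀ x, ∀ z, z ∈ blk n (st x) ↔ ∃ i < n, z = pt (prv x) (sv x + i) := by
      intro x z
      simp only [blk, Finset.mem_image, Finset.mem_range]
      constructor
      · rintro ⟨i, hi, rfl⟩
        exact ⟨i, hi, by rw [hstv, pt_pt]⟩
      · rintro ⟨i, hi, rfl⟩
        exact ⟨i, hi, by rw [hstv, pt_pt]⟩
    have hblkP : ∀ x, x ∉ P → ∀ z ∈ blk n (st x), z ∉ P := by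
      intro x hx z hz
      obtain ⟨i, hi, rfl⟩ := (hblkmem x z).1 hz
      have h1 := hsv1 x hx
      have h2 := hfit x hx
      have h3 := hgpos (prv x) (hprvP x)
      exact hgapP (prv x) (hprvP x) (sv x + i) (by omega) (by omega)
    have hdisjBP : ∀ x, x ∉ P → Disjoint P (blk n (st x)) := by
      intro x hx
      rw [Finset.disjoint_left]
      exact fun z hzP hzB => hblkP x hx z hzB hzP
    have hBB : ∀ x, x ∉ P → ∀ y, y ∉ P → blk n (st x) ≠ blk n (st y) →
        Disjoint (blk n (st x)) (blk n (st y)) := by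
      intro x hx y hy hne
      rw [Finset.disjoint_left]
      intro z hzx hzy
      obtain ⟨i, hi, hzi⟩ := (hblkmem x z).1 hzx
      obtain ⟨j, hj, hzj⟩ := (hblkmem y z).1 hzy
      have hfx := hfit x hx; have hfy := hfit y hy
      have h1x := hsv1 x hx; have h1y := hsv1 y hy
      have hgx := hgpos (prv x) (hprvP x); have hgy := hgpos (prv y) (hprvP y)
      have heq : pt (prv x) (sv x + i) = pt (prv y) (sv y + j) := by rw [← hzi, ← hzj]
      obtain ⟨hpp, htt⟩ := huniq (prv x) (hprvP x) (prv y) (hprvP y) (sv x + i) (sv y + j)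
        (by omega) (by omega) (by omega) (by omega) heq
      obtain ⟨ax, hax⟩ : ∃ a, sv x = n * a + 1 := by
        refine ⟨sv x / n, ?_⟩
        have := Nat.div_add_mod (sv x) n
        rw [hsvmod x hx] at this
        omega
      obtain ⟨ay, hay⟩ : ∃ a, sv y = n * a + 1 := by
        refine ⟨sv y / n, ?_⟩
        have := Nat.div_add_mod (sv y) n
        rw [hsvmod y hy] at this
        omega
      have hax2 : n * ax + i = n * ay + j := by rw [hax, hay] at htt; omega
      obtain ⟨hxy, -⟩ := helper2 hi hj hax2
      have hsveq : sv x = sv y := by rw [hax, hay, hxy]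
      apply hne
      rw [hstv x, hstv y, hpp, hsveq]
    -- the portrait
    set Blocks : Finset (Finset (Fin (d * n))) :=
      (Finset.univ.filter (fun x => x ∉ P)).image (fun x => blk n (st x)) with hBdef
    refine ⟨insert P Blocks, ⟨?_, ?_, ?_⟩, Finset.mem_insert_self _ _⟩
    · intro S hS
      rcases Finset.mem_insert.1 hS with rfl | hS'
      · exact ⟨hc2, hdvd, hpos⟩
      · obtain ⟨x, -, rfl⟩ := Finset.mem_image.1 hS'
        exact blk_pos hn hnm _
    · intro S hS T hT hST
      have getB : ∀ U, U ∈ Blocks → ∃ x, x ∉ P ∧ U = blk n (st x) := by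
        intro U hU
        obtain ⟨x, hx, rfl⟩ := Finset.mem_image.1 hU
        exact ⟨x, (Finset.mem_filter.1 hx).2, rfl⟩
      rcases Finset.mem_insert.1 hS with rfl | hS' <;> rcases Finset.mem_insert.1 hT with h | hT'
      · exact absurd h.symm hST
      · obtain ⟨y, hy, rfl⟩ := getB T hT'
        have hdj := hdisjBP y hy
        exact ⟨hdj, noncross_blk hnle hdj⟩
      · obtain ⟨x, hx, rfl⟩ := getB S hS'
        subst h
        have hdj := hdisjBP x hx
        exact ⟨hdj.symm, fun hc => noncross_blk hnle hdj (crosses_symm hc)⟩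
      · obtain ⟨x, hx, rfl⟩ := getB S hS'
        obtain ⟨y, hy, rfl⟩ := getB T hT'
        have hdj := hBB x hx y hy hST
        exact ⟨hdj, noncross_blk hnle (by rw [Finset.disjoint_right] at hdj ⊢; exact hdj)⟩
    · intro z
      by_cases hz : z ∈ P
      · exact ⟨P, Finset.mem_insert_self _ _, hz⟩
      · refine ⟨blk n (st z), Finset.mem_insert_of_mem (Finset.mem_image.2
          ⟨z, Finset.mem_filter.2 ⟨Finset.mem_univ z, hz⟩, rfl⟩), ?_⟩
        rw [hblkmem z z]
        refine ⟨(dp z - 1) % n, Nat.mod_lt _ (by omega), ?_⟩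
        have h1 := hdp0 z hz
        have h2 : (dp z - 1) % n ≤ dp z - 1 := Nat.mod_le _ _
        have h3 : sv z = dp z - (dp z - 1) % n := rfl
        rw [show sv z + (dp z - 1) % n = dp z by omega, hptdp z]
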